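/- Let K be an algebraically closed field, q ≥ 2 a natural number, and M an invertible n×n matrix over K that is diagonalizable (similar to a diagonal matrix) and similar to M^q. Then there exists a natural number k ≥ 1 such that M^(q^k − 1) = 1; in particular M has finite order, and if q is a power of a prime p this order is coprime to p. -/
import Mathlib

open Polynomial Matrix

private lemma my_charpoly_conj {K : Type*} [Field K] {n : ℕ} (P : (Matrix (Fin n) (Fin n) K)ˣ)
    (M : Matrix (Fin n) (Fin n) K) :
    ((P : Matrix (Fin n) (Fin n) K) * M * (↑P⁻¹ : Matrix (Fin n) (Fin n) K)).charpoly
      = M.charpoly := by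
  set f : Matrix (Fin n) (Fin n) K →+* Matrix (Fin n) (Fin n) K[X] :=
    (C : K →+* K[X]).mapMatrix with hf
  set Pc := f (P : Matrix (Fin n) (Fin n) K) with hPc
  set Pc' := f (↑P⁻¹ : Matrix (Fin n) (Fin n) K) with hPc'
  have hone : Pc * Pc' = 1 := by
    rw [hPc, hPc', ← _root_.map_mul, Units.mul_inv, _root_.map_one]
  have hX : Pc * Matrix.scalar (Fin n) (X : K[X]) * Pc' = Matrix.scalar (Fin n) (X : K[X]) := by
    rw [← (Matrix.scalar_commute (X : K[X]) (fun r' => Commute.all _ _) Pc).eq, mul_assoc, hone,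
      mul_one]
  have hcm : charmatrix ((P : Matrix (Fin n) (Fin n) K) * M * (↑P⁻¹ : Matrix (Fin n) (Fin n) K))
      = Pc * charmatrix M * Pc' := by
    unfold charmatrix
    rw [mul_sub, sub_mul, hX, _root_.map_mul, _root_.map_mul]
  have hone' : Pc' * Pc = 1 := by
    rw [hPc, hPc', ← _root_.map_mul, Units.inv_mul, _root_.map_one]
  have hdef : ∀ A : Matrix (Fin n) (Fin n) K, A.charpoly = (charmatrix A).det := fun _ => rfl
  rw [hdef, hdef, hcm, Matrix.det_mul, Matrix.det_mul, mul_comm, ← mul_assoc,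
    ← Matrix.det_mul, hone', Matrix.det_one, one_mul]

private lemma my_charpoly_diagonal {K : Type*} [Field K] {n : ℕ} (d : Fin n → K) :
    (Matrix.diagonal d).charpoly = ∏ i, (X - C (d i)) := by
  have hcm : charmatrix (Matrix.diagonal d) = Matrix.diagonal (fun i => X - C (d i)) := by
    ext i j
    rcases eq_or_ne i j with rfl | h
    · simp [charmatrix_apply_eq]
    · simp [charmatrix_apply_ne _ _ _ h, Matrix.diagonal_apply_ne _ h,
        Matrix.diagonal_apply_ne d h]
  have hdef : (Matrix.diagonal d).charpoly = (charmatrix (Matrix.diagonal d)).det := rfl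
  rw [hdef, hcm, Matrix.det_diagonal]

private lemma my_roots_prod {K : Type*} [Field K] {n : ℕ} (c : Fin n → K) :
    (∏ i, (X - C (c i))).roots = Finset.univ.val.map c := by
  have h : (∏ i, (X - C (c i))) = ((Finset.univ.val.map c).map fun a => X - C a).prod := by
    rw [Multiset.map_map, Finset.prod_eq_multiset_prod]
    rfl
  rw [h, Polynomial.roots_multiset_prod_X_sub_C]

/-- Let `K` be an algebraically closed field, `q ≥ 2` a natural number, and
`M` an invertible `n×n` matrix over `K` that is diagonalizable (similar to a diagonal
matrix) and similar to `M ^ q`. Then there exists a natural number `k ≥ 1` such that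
`M ^ (q ^ k - 1) = 1`; in particular `M` has finite order, and if `q` is a power of a
prime `p` this order is coprime to `p`. -/
theorem diagonalizable_selfsimilar_pow_has_finite_order
    {K : Type*} [Field K] [IsAlgClosed K] {n : ℕ} (q : ℕ) (hq : 2 ≤ q)
    (M : Matrix (Fin n) (Fin n) K) (hM : IsUnit M)
    (hdiag : ∃ (Q : (Matrix (Fin n) (Fin n) K)ˣ) (d : Fin n → K),
      (Q : Matrix (Fin n) (Fin n) K) * M * ((Q⁻¹ : (Matrix (Fin n) (Fin n) K)ˣ) :
        Matrix (Fin n) (Fin n) K) = Matrix.diagonal d)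
    (hsim : ∃ P : (Matrix (Fin n) (Fin n) K)ˣ,
      (P : Matrix (Fin n) (Fin n) K) * M * ((P⁻¹ : (Matrix (Fin n) (Fin n) K)ˣ) :
        Matrix (Fin n) (Fin n) K) = M ^ q) :
    (∃ k : ℕ, 1 ≤ k ∧ M ^ (q ^ k - 1) = 1) ∧ IsOfFinOrder M ∧
      (∀ p r : ℕ, p.Prime → 1 ≤ r → q = p ^ r → Nat.Coprime (orderOf M) p) := by
  classical
  obtain ⟨Q, d, hQ⟩ := hdiag
  obtain ⟨P, hP⟩ := hsim
  -- the diagonal matrix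
  set D : Matrix (Fin n) (Fin n) K := Matrix.diagonal d with hD
  -- charpoly of D^q equals charpoly of D
  have hDq : D ^ q = (↑(Q * P) : Matrix (Fin n) (Fin n) K) * M *
      (↑(Q * P)⁻¹ : Matrix (Fin n) (Fin n) K) := by
    rw [← hQ, Units.conj_pow, ← hP, _root_.mul_inv_rev, Units.val_mul, Units.val_mul]
    noncomm_ring
  have hMD : M.charpoly = D.charpoly := by
    rw [← hQ, my_charpoly_conj]
  have hcp : (D ^ q).charpoly = D.charpoly := by
    rw [hDq, my_charpoly_conj, hMD]
  -- D^q is the diagonal matrix of d^q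
  have hDqdiag : D ^ q = Matrix.diagonal (fun i => d i ^ q) := by
    rw [hD, Matrix.diagonal_pow]
    rfl
  -- multiset of eigenvalues is preserved by q-th power
  have hms : Finset.univ.val.map (fun i => d i ^ q) = Finset.univ.val.map d := by
    have h1 := congrArg Polynomial.roots hcp
    rwa [hDqdiag, hD, my_charpoly_diagonal, my_charpoly_diagonal, my_roots_prod,
      my_roots_prod] at h1
  -- set of eigenvalues
  set S : Finset K := Finset.univ.image d with hS
  have hmemS : ∀ i, d i ∈ S := fun i => Finset.mem_image_of_mem d (Finset.mem_univ i)
  have hqS : ∀ x ∈ S, x ^ q ∈ S := by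
    intro x hx
    obtain ⟨i, _, rfl⟩ := Finset.mem_image.mp hx
    have : d i ^ q ∈ Finset.univ.val.map d := by
      rw [← hms]
      exact Multiset.mem_map.mpr ⟨i, Finset.mem_univ i, rfl⟩
    obtain ⟨j, _, hj⟩ := Multiset.mem_map.mp this
    rw [← hj]; exact hmemS j
  -- the q-power map as a permutation of S
  set g : {x // x ∈ S} → {x // x ∈ S} := fun x => ⟨(x : K) ^ q, hqS x x.2⟩ with hg
  have gsurj : Function.Surjective g := by
    rintro ⟨y, hy⟩
    obtain ⟨i, _, rfl⟩ := Finset.mem_image.mp hy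
    have : d i ∈ Finset.univ.val.map (fun i => d i ^ q) := by
      rw [hms]
      exact Multiset.mem_map.mpr ⟨i, Finset.mem_univ i, rfl⟩
    obtain ⟨j, _, hj⟩ := Multiset.mem_map.mp this
    exact ⟨⟨d j, hmemS j⟩, Subtype.ext hj⟩
  have gbij : Function.Bijective g := Finite.surjective_iff_bijective.mp gsurj
  set e : Equiv.Perm {x // x ∈ S} := Equiv.ofBijective g gbij with he
  set k : ℕ := orderOf e with hkdef
  have hk : 1 ≤ k := orderOf_pos e
  have hek : e ^ k = 1 := pow_orderOf_eq_one e
  have hiter : ∀ (m : ℕ) (x : {x // x ∈ S}), ((e ^ m) x : K) = (x : K) ^ q ^ m := by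
    intro m
    induction m with
    | zero => intro x; simp
    | succ m ih =>
      intro x
      have h1 : (e ^ (m + 1)) x = (e ^ m) (e x) := by
        rw [pow_succ, Equiv.Perm.mul_apply]
      have h2 : ((e x : K)) = (x : K) ^ q := rfl
      rw [h1, ih (e x), h2, ← pow_mul, ← pow_succ']
  have hfix : ∀ i, d i ^ q ^ k = d i := by
    intro i
    have := hiter k ⟨d i, hmemS i⟩
    rw [hek] at this
    simpa using this.symm
  -- eigenvalues are nonzero
  have hDunit : IsUnit D := by
    rw [← hQ]
    exact (Q.isUnit.mul hM).mul Q⁻¹.isUnit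
  have hd0 : ∀ i, d i ≠ 0 := by
    have hdet : IsUnit (∏ i, d i) := by
      have := (Matrix.isUnit_iff_isUnit_det D).mp hDunit
      rwa [hD, Matrix.det_diagonal] at this
    intro i
    exact Finset.prod_ne_zero_iff.mp (hdet.ne_zero) i (Finset.mem_univ i)
  -- the key power identity
  have hqk1 : 1 ≤ q ^ k := Nat.one_le_pow _ _ (by omega)
  have hNsucc : q ^ k - 1 + 1 = q ^ k := Nat.sub_add_cancel hqk1
  have hdN : ∀ i, d i ^ (q ^ k - 1) = 1 := by
    intro i
    have h1 : d i ^ (q ^ k - 1) * d i = 1 * d i := by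
      rw [one_mul, ← pow_succ, hNsucc, hfix i]
    exact mul_right_cancel₀ (hd0 i) h1
  have hDN : D ^ (q ^ k - 1) = 1 := by
    rw [hD, Matrix.diagonal_pow]
    have : (d ^ (q ^ k - 1)) = fun _ => (1 : K) := funext fun i => by
      simpa [Pi.pow_apply] using hdN i
    rw [this, Matrix.diagonal_one]
  have hMeq : M = (↑Q⁻¹ : Matrix (Fin n) (Fin n) K) * D * (↑Q : Matrix (Fin n) (Fin n) K) := by
    rw [← hQ]
    simp only [← mul_assoc]
    rw [Units.inv_mul, one_mul, mul_assoc, Units.inv_mul, mul_one]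
  have hMN : M ^ (q ^ k - 1) = 1 := by
    rw [hMeq, Units.conj_pow', hDN, mul_one, Units.inv_mul]
  have hNpos : 0 < q ^ k - 1 := by
    have : 2 ≤ q ^ k := le_trans hq (Nat.le_self_pow (by omega) q)
    omega
  refine ⟨⟨k, hk, hMN⟩, isOfFinOrder_iff_pow_eq_one.mpr ⟨q ^ k - 1, hNpos, hMN⟩, ?_⟩
  intro p r hp hr hqpr
  rw [Nat.coprime_comm]
  refine (Nat.Prime.coprime_iff_not_dvd hp).mpr ?_
  intro hpd
  have hdvd : orderOf M ∣ q ^ k - 1 := orderOf_dvd_of_pow_eq_one hMN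
  have hpN : p ∣ q ^ k - 1 := hpd.trans hdvd
  have hpq : p ∣ q ^ k := by
    rw [hqpr, ← pow_mul]
    exact dvd_pow_self p (by positivity)
  have hp1 : p ∣ 1 := by
    have := Nat.dvd_sub hpq hpN
    rwa [Nat.sub_sub_self hqk1] at this
  exact hp.one_lt.ne' (Nat.dvd_one.mp hp1)
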